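/- The join (C_3 ∪ C_3) + C_3 is 1-planar. -/

import Mathlib

open SimpleGraph

/-- A graph is 1-planar if it admits a drawing in the plane (vertices at distinct points,
edges as continuous injective arcs joining the points of their endvertices, arcs meeting
vertex points only at their endpoints, no point interior to three edges) in which each edge
is crossed at most once, i.e. the interior of the arc of each edge meets the interiors of
the arcs of the other edges in at most one point. -/
def SimpleGraph.OnePlanar {V : Type*} (G : SimpleGraph V) : Prop :=
  ∃ (pos : V → ℝ × ℝ) (γ : V → V → ℝ → ℝ × ℝ),
    -- distinct vertices are drawn at distinct points
    Function.Injective pos ∧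
    -- each edge is drawn as a continuous injective arc joining its endpoints
    (∀ u v, G.Adj u v → ContinuousOn (γ u v) (Set.Icc 0 1)) ∧
    (∀ u v, G.Adj u v → Set.InjOn (γ u v) (Set.Icc 0 1)) ∧
    (∀ u v, G.Adj u v → γ u v 0 = pos u ∧ γ u v 1 = pos v) ∧
    -- the arc drawn for an edge does not depend on its orientation
    (∀ u v, G.Adj u v → ∀ t : ℝ, γ v u t = γ u v (1 - t)) ∧
    -- the interior of an arc passes through no vertex point
    (∀ u v, G.Adj u v → ∀ t ∈ Set.Ioo (0:ℝ) 1, ∀ w, γ u v t ≠ pos w) ∧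
    -- no point of the plane is interior to the arcs of three distinct edges
    (∀ u v x y x' y', G.Adj u v → G.Adj x y → G.Adj x' y' →
      ∀ t ∈ Set.Ioo (0:ℝ) 1, ∀ s ∈ Set.Ioo (0:ℝ) 1, ∀ s' ∈ Set.Ioo (0:ℝ) 1,
        γ x y s = γ u v t → γ x' y' s' = γ u v t →
        s(x, y) ≠ s(u, v) → s(x', y') ≠ s(u, v) → s(x, y) = s(x', y')) ∧
    -- each edge is crossed at most once
    (∀ u v, G.Adj u v →
      {t : ℝ | t ∈ Set.Ioo (0:ℝ) 1 ∧ ∃ x y, G.Adj x y ∧ s(x, y) ≠ s(u, v) ∧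
        ∃ s ∈ Set.Ioo (0:ℝ) 1, γ x y s = γ u v t}.Subsingleton)

/-- The join `G + H` of two vertex-disjoint graphs: the disjoint union of `G` and `H`
together with all edges between the two vertex sets. -/
def SimpleGraph.join {α β : Type*} (G : SimpleGraph α) (H : SimpleGraph β) :
    SimpleGraph (α ⊕ β) where
  Adj u v := match u, v with
    | Sum.inl u, Sum.inl v => G.Adj u v
    | Sum.inr u, Sum.inr v => H.Adj u v
    | _, _ => True
  symm := ⟨fun u v => match u, v with
    | Sum.inl _, Sum.inl _ => fun h => G.adj_symm h
    | Sum.inr _, Sum.inr _ => fun h => H.adj_symm h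
    | Sum.inl _, Sum.inr _ => fun _ => trivial
    | Sum.inr _, Sum.inl _ => fun _ => trivial⟩
  loopless := ⟨fun u => match u with
    | Sum.inl a => G.loopless.irrefl a
    | Sum.inr b => H.loopless.irrefl b⟩

/-- `G` is isomorphic to a subgraph of `H`. -/
def SimpleGraph.IsSubgraphOf {α β : Type*} (G : SimpleGraph α) (H : SimpleGraph β) : Prop :=
  ∃ f : G →g H, Function.Injective f


namespace C3P

abbrev V : Type := (Fin 3 ⊕ Fin 3) ⊕ Fin 3

/-! ### Integer coordinates of the drawing -/

def pz : V → ℤ × ℤ :=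
  Sum.elim
    (Sum.elim ![(2, 0), (-1, 2), (-1, -2)] ![(100, 0), (-50, 85), (-50, -85)])
    ![(12, 0), (-6, 10), (-6, -10)]

abbrev crossZ (p q : ℤ × ℤ) : ℤ := p.1 * q.2 - p.2 * q.1
abbrev dotZ (p q : ℤ × ℤ) : ℤ := p.1 * q.1 + p.2 * q.2

/-- certificate that no point of the open segment (a,b) equals c -/
abbrev certVert (a b c : ℤ × ℤ) : Prop :=
  1 ≤ dotZ (b - a) (b - a) ∧
    (crossZ (b - a) (c - a) ≠ 0 ∨ dotZ (c - a) (b - a) ≤ 0 ∨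
      dotZ (b - a) (b - a) ≤ dotZ (c - a) (b - a))

/-- certificate that the open segments (a,b) and (c,d) are disjoint -/
abbrev disjCert (a b c d : ℤ × ℤ) : Prop :=
  (crossZ (b - a) (d - c) ≠ 0 ∧
    (crossZ (c - a) (d - c) * crossZ (b - a) (d - c) ≤ 0 ∨
     crossZ (b - a) (d - c) * crossZ (b - a) (d - c) ≤
       crossZ (c - a) (d - c) * crossZ (b - a) (d - c) ∨
     crossZ (c - a) (b - a) * crossZ (b - a) (d - c) ≤ 0 ∨
     crossZ (b - a) (d - c) * crossZ (b - a) (d - c) ≤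
       crossZ (c - a) (b - a) * crossZ (b - a) (d - c))) ∨
  (crossZ (b - a) (d - c) = 0 ∧ crossZ (c - a) (b - a) ≠ 0) ∨
  (crossZ (b - a) (d - c) = 0 ∧ 1 ≤ dotZ (b - a) (b - a) ∧
    ((dotZ (c - a) (b - a) ≤ 0 ∧ dotZ (d - a) (b - a) ≤ 0) ∨
     (dotZ (b - a) (b - a) ≤ dotZ (c - a) (b - a) ∧
      dotZ (b - a) (b - a) ≤ dotZ (d - a) (b - a))))

/-! ### Generic geometric lemmas over ℝ -/

lemma segVert (a b c : ℤ × ℤ) (hc : certVert a b c) (t : ℝ) (ht0 : 0 < t) (ht1 : t < 1)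
    (hx : (1 - t) * (a.1 : ℝ) + t * (b.1 : ℝ) = (c.1 : ℝ))
    (hy : (1 - t) * (a.2 : ℝ) + t * (b.2 : ℝ) = (c.2 : ℝ)) : False := by
  obtain ⟨a1, a2⟩ := a; obtain ⟨b1, b2⟩ := b; obtain ⟨c1, c2⟩ := c
  dsimp only at hx hy
  simp only [certVert, crossZ, dotZ, Prod.mk_sub_mk] at hc
  obtain ⟨hn, hc⟩ := hc
  have hn' : (1 : ℝ) ≤ ((b1 : ℝ) - a1) * ((b1 : ℝ) - a1) + ((b2 : ℝ) - a2) * ((b2 : ℝ) - a2) := by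
    exact_mod_cast hn
  have e1 : (c1 : ℝ) - a1 = t * ((b1 : ℝ) - a1) := by linear_combination -hx
  have e2 : (c2 : ℝ) - a2 = t * ((b2 : ℝ) - a2) := by linear_combination -hy
  have key : ((c1 : ℝ) - a1) * ((b1 : ℝ) - a1) + ((c2 : ℝ) - a2) * ((b2 : ℝ) - a2)
      = t * (((b1 : ℝ) - a1) * ((b1 : ℝ) - a1) + ((b2 : ℝ) - a2) * ((b2 : ℝ) - a2)) := by
    linear_combination ((b1 : ℝ) - a1) * e1 + ((b2 : ℝ) - a2) * e2
  rcases hc with hc | hc | hc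
  · apply hc
    have : ((b1 : ℝ) - a1) * ((c2 : ℝ) - a2) - ((b2 : ℝ) - a2) * ((c1 : ℝ) - a1) = 0 := by
      linear_combination ((b1 : ℝ) - a1) * e2 - ((b2 : ℝ) - a2) * e1
    exact_mod_cast this
  · have hc' : ((c1 : ℝ) - a1) * ((b1 : ℝ) - a1) + ((c2 : ℝ) - a2) * ((b2 : ℝ) - a2) ≤ 0 := by
      exact_mod_cast hc
    nlinarith [key, mul_pos ht0 (show (0:ℝ) < ((b1 : ℝ) - a1) * ((b1 : ℝ) - a1)
      + ((b2 : ℝ) - a2) * ((b2 : ℝ) - a2) by linarith)]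
  · have hc' : ((b1 : ℝ) - a1) * ((b1 : ℝ) - a1) + ((b2 : ℝ) - a2) * ((b2 : ℝ) - a2)
        ≤ ((c1 : ℝ) - a1) * ((b1 : ℝ) - a1) + ((c2 : ℝ) - a2) * ((b2 : ℝ) - a2) := by
      exact_mod_cast hc
    nlinarith [key, mul_pos (show (0:ℝ) < 1 - t by linarith)
      (show (0:ℝ) < ((b1 : ℝ) - a1) * ((b1 : ℝ) - a1)
        + ((b2 : ℝ) - a2) * ((b2 : ℝ) - a2) by linarith)]

set_option maxHeartbeats 1000000 in
lemma segDisj (a b c d : ℤ × ℤ) (hc : disjCert a b c d) (t s : ℝ)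
    (ht0 : 0 < t) (ht1 : t < 1) (hs0 : 0 < s) (hs1 : s < 1)
    (hx : (1 - t) * (a.1 : ℝ) + t * (b.1 : ℝ) = (1 - s) * (c.1 : ℝ) + s * (d.1 : ℝ))
    (hy : (1 - t) * (a.2 : ℝ) + t * (b.2 : ℝ) = (1 - s) * (c.2 : ℝ) + s * (d.2 : ℝ)) : False := by
  obtain ⟨a1, a2⟩ := a; obtain ⟨b1, b2⟩ := b; obtain ⟨c1, c2⟩ := c; obtain ⟨d1, d2⟩ := d
  dsimp only at hx hy
  simp only [disjCert, crossZ, dotZ, Prod.mk_sub_mk] at hc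
  have E1 : t * ((b1 : ℝ) - a1) - s * ((d1 : ℝ) - c1) = (c1 : ℝ) - a1 := by linear_combination hx
  have E2 : t * ((b2 : ℝ) - a2) - s * ((d2 : ℝ) - c2) = (c2 : ℝ) - a2 := by linear_combination hy
  set R : ℝ := ((b1 : ℝ) - a1) * ((d2 : ℝ) - c2) - ((b2 : ℝ) - a2) * ((d1 : ℝ) - c1) with hR
  set TN : ℝ := ((c1 : ℝ) - a1) * ((d2 : ℝ) - c2) - ((c2 : ℝ) - a2) * ((d1 : ℝ) - c1) with hTN
  set SN : ℝ := ((c1 : ℝ) - a1) * ((b2 : ℝ) - a2) - ((c2 : ℝ) - a2) * ((b1 : ℝ) - a1) with hSN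
  have htr : t * R = TN := by
    rw [hR, hTN]; linear_combination ((d2 : ℝ) - c2) * E1 - ((d1 : ℝ) - c1) * E2
  have hsr : s * R = SN := by
    rw [hR, hSN]; linear_combination ((b2 : ℝ) - a2) * E1 - ((b1 : ℝ) - a1) * E2
  rcases hc with ⟨hr, hc⟩ | ⟨hr, hsn⟩ | ⟨hr, hn, hc⟩
  · have hr' : R ≠ 0 := by
      rw [hR]; intro h; exact hr (by exact_mod_cast h)
    have hR2 : 0 < R * R := mul_self_pos.mpr hr'
    rcases hc with hc | hc | hc | hc
    · have hc' : TN * R ≤ 0 := by rw [hTN, hR]; exact_mod_cast hc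
      have hq : TN * R = t * (R * R) := by rw [← htr]; ring
      linarith [mul_pos ht0 hR2]
    · have hc' : R * R ≤ TN * R := by rw [hTN, hR]; exact_mod_cast hc
      have hq : TN * R = t * (R * R) := by rw [← htr]; ring
      linarith [mul_pos (show (0:ℝ) < 1 - t by linarith) hR2]
    · have hc' : SN * R ≤ 0 := by rw [hSN, hR]; exact_mod_cast hc
      have hq : SN * R = s * (R * R) := by rw [← hsr]; ring
      linarith [mul_pos hs0 hR2]
    · have hc' : R * R ≤ SN * R := by rw [hSN, hR]; exact_mod_cast hc
      have hq : SN * R = s * (R * R) := by rw [← hsr]; ring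
      linarith [mul_pos (show (0:ℝ) < 1 - s by linarith) hR2]
  · have hr' : R = 0 := by rw [hR]; exact_mod_cast hr
    have h0 : SN = 0 := by rw [← hsr, hr']; ring
    apply hsn
    have : ((c1 : ℝ) - a1) * ((b2 : ℝ) - a2) - ((c2 : ℝ) - a2) * ((b1 : ℝ) - a1) = 0 := by
      rw [← hSN]; exact h0
    exact_mod_cast this
  · have hr' : R = 0 := by rw [hR]; exact_mod_cast hr
    set N : ℝ := ((b1 : ℝ) - a1) * ((b1 : ℝ) - a1) + ((b2 : ℝ) - a2) * ((b2 : ℝ) - a2) with hNdef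
    set AL : ℝ := ((c1 : ℝ) - a1) * ((b1 : ℝ) - a1) + ((c2 : ℝ) - a2) * ((b2 : ℝ) - a2) with hALdef
    set BE : ℝ := ((d1 : ℝ) - a1) * ((b1 : ℝ) - a1) + ((d2 : ℝ) - a2) * ((b2 : ℝ) - a2) with hBEdef
    have hN : (1 : ℝ) ≤ N := by rw [hNdef]; exact_mod_cast hn
    have hNpos : (0 : ℝ) < N := by linarith
    have key : t * N = (1 - s) * AL + s * BE := by
      rw [hNdef, hALdef, hBEdef]
      linear_combination ((b1 : ℝ) - a1) * E1 + ((b2 : ℝ) - a2) * E2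
    rcases hc with ⟨h1, h2⟩ | ⟨h1, h2⟩
    · have hAL : AL ≤ 0 := by rw [hALdef]; exact_mod_cast h1
      have hBE : BE ≤ 0 := by rw [hBEdef]; exact_mod_cast h2
      linarith [key, mul_pos ht0 hNpos,
        mul_nonpos_of_nonneg_of_nonpos (show (0:ℝ) ≤ 1 - s by linarith) hAL,
        mul_nonpos_of_nonneg_of_nonpos hs0.le hBE]
    · have hAL : N ≤ AL := by rw [hNdef, hALdef]; exact_mod_cast h1
      have hBE : N ≤ BE := by rw [hNdef, hBEdef]; exact_mod_cast h2
      have e1 : (1 - s) * N ≤ (1 - s) * AL :=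
        mul_le_mul_of_nonneg_left hAL (by linarith)
      have e2 : s * N ≤ s * BE := mul_le_mul_of_nonneg_left hBE hs0.le
      have e3 : (0:ℝ) < (1 - t) * N := mul_pos (by linarith) hNpos
      linarith [key, e1, e2, e3]

lemma lineUnique (a b c d : ℤ × ℤ) (hr : crossZ (b - a) (d - c) ≠ 0)
    (t t' σ σ' : ℝ)
    (h1x : (1 - σ) * (c.1 : ℝ) + σ * (d.1 : ℝ) = (1 - t) * (a.1 : ℝ) + t * (b.1 : ℝ))
    (h1y : (1 - σ) * (c.2 : ℝ) + σ * (d.2 : ℝ) = (1 - t) * (a.2 : ℝ) + t * (b.2 : ℝ))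
    (h2x : (1 - σ') * (c.1 : ℝ) + σ' * (d.1 : ℝ) = (1 - t') * (a.1 : ℝ) + t' * (b.1 : ℝ))
    (h2y : (1 - σ') * (c.2 : ℝ) + σ' * (d.2 : ℝ) = (1 - t') * (a.2 : ℝ) + t' * (b.2 : ℝ)) :
    t = t' := by
  obtain ⟨a1, a2⟩ := a; obtain ⟨b1, b2⟩ := b; obtain ⟨c1, c2⟩ := c; obtain ⟨d1, d2⟩ := d
  dsimp only at h1x h1y h2x h2y
  simp only [crossZ, Prod.mk_sub_mk] at hr
  have hr' : ((b1 : ℝ) - a1) * ((d2 : ℝ) - c2) - ((b2 : ℝ) - a2) * ((d1 : ℝ) - c1) ≠ 0 := by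
    intro h; exact hr (by exact_mod_cast h)
  have key : (t - t')
      * (((b1 : ℝ) - a1) * ((d2 : ℝ) - c2) - ((b2 : ℝ) - a2) * ((d1 : ℝ) - c1)) = 0 := by
    linear_combination ((d2 : ℝ) - c2) * h2x - ((d2 : ℝ) - c2) * h1x
      - ((d1 : ℝ) - c1) * h2y + ((d1 : ℝ) - c1) * h1y
  rcases mul_eq_zero.mp key with h | h
  · linarith
  · exact absurd h hr'

/-! ### The graph and the combinatorial certificates -/

abbrev Gr : SimpleGraph V := (cycleGraph 3 ⊕g cycleGraph 3).join (cycleGraph 3)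

def adjB : V → V → Bool
  | .inl (.inl i), .inl (.inl j) => i != j
  | .inl (.inr i), .inl (.inr j) => i != j
  | .inr i, .inr j => i != j
  | .inl (.inl _), .inr _ => true
  | .inl (.inr _), .inr _ => true
  | .inr _, .inl _ => true
  | _, _ => false

/-- the unique crossing partner of an edge (if any) -/
def partner : V → V → Option (V × V)
  | .inl (.inl i), .inr j => if i = j then none else some (.inl (.inl j), .inr i)
  | .inr j, .inl (.inl i) => if i = j then none else some (.inl (.inl j), .inr i)
  | .inl (.inr i), .inr j => if i = j then none else some (.inl (.inr j), .inr i)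
  | .inr j, .inl (.inr i) => if i = j then none else some (.inl (.inr j), .inr i)
  | _, _ => none

def guardB (u v x y : V) : Bool :=
  adjB u v && adjB x y && decide (¬(x = u ∧ y = v)) && decide (¬(x = v ∧ y = u))
    && decide (partner u v ≠ some (x, y)) && decide (partner u v ≠ some (y, x))

instance sumDec : DecidableRel ((cycleGraph 3 ⊕g cycleGraph 3).Adj) := fun u v =>
  match u, v with
  | .inl u, .inl v => inferInstanceAs (Decidable ((cycleGraph 3).Adj u v))
  | .inl _, .inr _ => .isFalse (by simp)
  | .inr _, .inl _ => .isFalse (by simp)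
  | .inr u, .inr v => inferInstanceAs (Decidable ((cycleGraph 3).Adj u v))

instance grDec : DecidableRel Gr.Adj := fun u v =>
  match u, v with
  | .inl u, .inl v => inferInstanceAs (Decidable ((cycleGraph 3 ⊕g cycleGraph 3).Adj u v))
  | .inl _, .inr _ => .isTrue trivial
  | .inr _, .inl _ => .isTrue trivial
  | .inr u, .inr v => inferInstanceAs (Decidable ((cycleGraph 3).Adj u v))

lemma adj_iff : ∀ u v : V, Gr.Adj u v ↔ adjB u v = true := by decide

lemma L0 : ∀ u v : V, u ≠ v → pz u ≠ pz v := by decide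

set_option maxHeartbeats 2000000 in
lemma L3 : ∀ u v w : V, adjB u v = true → certVert (pz u) (pz v) (pz w) := by decide

set_option maxHeartbeats 4000000 in
lemma L2 : ∀ u v x y : V, partner u v = some (x, y) →
    crossZ (pz v - pz u) (pz y - pz x) ≠ 0 := by decide

set_option maxHeartbeats 16000000 in
lemma L1 : ∀ u v x y : V, guardB u v x y = true →
    disjCert (pz u) (pz v) (pz x) (pz y) := by decide

/-! ### The drawing -/

def pos : V → ℝ × ℝ := fun v => (((pz v).1 : ℝ), ((pz v).2 : ℝ))

def γr : V → V → ℝ → ℝ × ℝ := fun u v t =>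
  ((1 - t) * (pos u).1 + t * (pos v).1, (1 - t) * (pos u).2 + t * (pos v).2)

lemma adjT {u v : V} (h : Gr.Adj u v) : adjB u v = true := (adj_iff u v).1 h

lemma sym2_ne_elim {x y u v : V} (h : s(x, y) ≠ s(u, v)) :
    ¬(x = u ∧ y = v) ∧ ¬(x = v ∧ y = u) := by
  constructor
  · rintro ⟨rfl, rfl⟩; exact h rfl
  · rintro ⟨rfl, rfl⟩; exact h Sym2.eq_swap

lemma γr_symm (u v : V) (t : ℝ) : γr v u t = γr u v (1 - t) := by
  simp only [γr, Prod.mk.injEq]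
  constructor <;> ring

lemma getPartner {u v x y : V} (huv : Gr.Adj u v) (hxy : Gr.Adj x y)
    (hne : s(x, y) ≠ s(u, v)) {t s : ℝ} (ht : t ∈ Set.Ioo (0:ℝ) 1) (hs : s ∈ Set.Ioo (0:ℝ) 1)
    (heq : γr x y s = γr u v t) :
    ∃ p : V × V, partner u v = some p ∧ ((x, y) = p ∨ (y, x) = p) := by
  by_contra hm
  push_neg at hm
  have h4a : partner u v ≠ some (x, y) := fun he => (hm _ he).1 rfl
  have h4b : partner u v ≠ some (y, x) := fun he => (hm _ he).2 rfl
  obtain ⟨hnea, hneb⟩ := sym2_ne_elim hne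
  have hg : guardB u v x y = true := by
    simp [guardB, adjT huv, adjT hxy, h4a, h4b, hnea, hneb]
  exact segDisj (pz u) (pz v) (pz x) (pz y) (L1 u v x y hg) t s
    ht.1 ht.2 hs.1 hs.2 (congrArg Prod.fst heq.symm) (congrArg Prod.snd heq.symm)

lemma symEq {x y : V} {p : V × V} (h : (x, y) = p ∨ (y, x) = p) :
    s(x, y) = s(p.1, p.2) := by
  rcases h with h | h
  · rw [← h]
  · rw [← h]; exact Sym2.eq_swap

lemma toSigma {x y p1 p2 : V} (h : (x, y) = (p1, p2) ∨ (y, x) = (p1, p2)) (s : ℝ) :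
    ∃ σ : ℝ, γr p1 p2 σ = γr x y s := by
  rcases h with h | h <;> obtain ⟨h1, h2⟩ := Prod.mk.injEq .. ▸ h
  · subst h1; subst h2; exact ⟨s, rfl⟩
  · subst h1; subst h2
    exact ⟨1 - s, by rw [γr_symm, sub_sub_cancel]⟩

end C3P

open C3P in

/-- `(C₃ ∪ C₃) + C₃` is 1-planar. -/
theorem c3_cup_c3_join_c3_onePlanar :
    ((cycleGraph 3 ⊕g cycleGraph 3).join (cycleGraph 3)).OnePlanar := by
  refine ⟨pos, γr, ?_, ?_, ?_, ?_, ?_, ?_, ?_, ?_⟩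
  · -- injectivity of pos
    intro u v h
    by_contra hne
    apply L0 u v hne
    have h1 := congrArg Prod.fst h
    have h2 := congrArg Prod.snd h
    simp only [pos] at h1 h2
    exact Prod.ext (by exact_mod_cast h1) (by exact_mod_cast h2)
  · -- continuity
    intro u v _
    apply Continuous.continuousOn
    unfold γr
    fun_prop
  · -- injectivity of the arcs
    intro u v huv t1 _ t2 _ h12
    have hne : pz u ≠ pz v := L0 u v huv.ne
    have e1 : (t1 - t2) * (((pz v).1 : ℝ) - ((pz u).1 : ℝ)) = 0 := by
      have h := congrArg Prod.fst h12
      simp only [γr, pos] at h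
      linear_combination h
    have e2 : (t1 - t2) * (((pz v).2 : ℝ) - ((pz u).2 : ℝ)) = 0 := by
      have h := congrArg Prod.snd h12
      simp only [γr, pos] at h
      linear_combination h
    rcases mul_eq_zero.mp e1 with h | h
    · linarith
    · rcases mul_eq_zero.mp e2 with h' | h'
      · linarith
      · exfalso
        apply hne
        have k1 : (pz u).1 = (pz v).1 := by
          have := sub_eq_zero.mp h; exact_mod_cast this.symm
        have k2 : (pz u).2 = (pz v).2 := by
          have := sub_eq_zero.mp h'; exact_mod_cast this.symm
        exact Prod.ext k1 k2
  · -- endpoints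
    intro u v _
    constructor
    · refine Prod.ext ?_ ?_ <;> simp [γr]
    · refine Prod.ext ?_ ?_ <;> simp [γr]
  · -- orientation symmetry
    intro u v _ t
    exact γr_symm u v t
  · -- interiors avoid vertices
    intro u v huv t ht w heq
    exact segVert (pz u) (pz v) (pz w) (L3 u v w (adjT huv)) t ht.1 ht.2
      (congrArg Prod.fst heq) (congrArg Prod.snd heq)
  · -- no triple points
    intro u v x y x' y' huv hxy hxy' t ht s hs s' hs' h1 h2 hne1 hne2
    obtain ⟨p, hp, hor⟩ := getPartner huv hxy hne1 ht hs h1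
    obtain ⟨p', hp', hor'⟩ := getPartner huv hxy' hne2 ht hs' h2
    have hpp : p = p' := Option.some.inj (hp ▸ hp')
    rw [symEq hor, symEq hor', hpp]
  · -- each edge crossed at most once
    intro u v huv t1 h1 t2 h2
    simp only [Set.mem_setOf_eq] at h1 h2
    obtain ⟨ht1, x, y, hxy, hne, s1, hs1, heq1⟩ := h1
    obtain ⟨ht2, x2, y2, hxy2, hne2, s2, hs2, heq2⟩ := h2
    obtain ⟨p, hp, hor⟩ := getPartner huv hxy hne ht1 hs1 heq1
    obtain ⟨p', hp', hor'⟩ := getPartner huv hxy2 hne2 ht2 hs2 heq2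
    have hpp : p = p' := Option.some.inj (hp ▸ hp')
    subst hpp
    obtain ⟨q1, q2⟩ := p
    have hrz := L2 u v q1 q2 hp
    obtain ⟨σ1, hσ1⟩ := toSigma hor s1
    obtain ⟨σ2, hσ2⟩ := toSigma hor' s2
    have eq1 := hσ1.trans heq1
    have eq2 := hσ2.trans heq2
    exact lineUnique (pz u) (pz v) (pz q1) (pz q2) hrz t1 t2 σ1 σ2
      (congrArg Prod.fst eq1) (congrArg Prod.snd eq1)
      (congrArg Prod.fst eq2) (congrArg Prod.snd eq2)
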